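/- If X is a centered σ²-sub-Gaussian random variable, then for every λ with 0 ≤ λ ≤ 1/(4σ²), E exp(λ(X² - E X²)) ≤ exp(10 λ² σ⁴). -/

import Mathlib

open MeasureTheory Real Nat

lemma real_exp_tsum (t : ℝ) : Real.exp t = ∑' n : ℕ, t ^ n / n ! := by
  rw [Real.exp_eq_exp_ℝ, NormedSpace.exp_eq_tsum_div]

lemma pow_div_factorial_le_exp {v : ℝ} (hv : 0 ≤ v) (n : ℕ) : v ^ n / n ! ≤ Real.exp v := by
  calc v ^ n / n ! ≤ ∑' m : ℕ, v ^ m / m ! := by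
        refine Summable.le_tsum (Real.summable_pow_div_factorial v) n fun j _ => by positivity
    _ = Real.exp v := (real_exp_tsum v).symm

lemma pow_div_factorial_le_cosh (t : ℝ) (k : ℕ) :
    t ^ (2 * k) / (2 * k)! ≤ (Real.exp t + Real.exp (-t)) / 2 := by
  have hs1 := Real.summable_pow_div_factorial t
  have hs2 := Real.summable_pow_div_factorial (-t)
  have hsum : Summable (fun n : ℕ => (t ^ n / n ! + (-t) ^ n / n !) / 2) :=
    (hs1.add hs2).div_const 2
  have h1 : (Real.exp t + Real.exp (-t)) / 2 = ∑' n : ℕ, (t ^ n / n ! + (-t) ^ n / n !) / 2 := by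
    rw [real_exp_tsum t, real_exp_tsum (-t), ← Summable.tsum_add hs1 hs2, tsum_div_const]
  rw [h1]
  have hterm : t ^ (2 * k) / (2 * k)! = (t ^ (2*k) / (2*k)! + (-t) ^ (2*k) / (2*k)!) / 2 := by
    rw [Even.neg_pow ⟨k, by ring⟩]; ring
  rw [hterm]
  refine Summable.le_tsum hsum (2*k) fun j _ => ?_
  rcases Nat.even_or_odd j with ⟨m, hm⟩ | ⟨m, hm⟩
  · have : (-t) ^ j = t ^ j := Even.neg_pow ⟨m, by omega⟩ t
    rw [this]
    have : 0 ≤ t ^ j := by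
      rw [hm]; have : t^(m+m) = (t^m)^2 := by ring
      rw [this]; positivity
    positivity
  · have : (-t) ^ j = - t ^ j := Odd.neg_pow ⟨m, by omega⟩ t
    rw [this]; simp [neg_div]

lemma stirling_low (n : ℕ) (hn : 1 ≤ n) :
    Real.sqrt π * (Real.sqrt (2*n) * ((n : ℝ) / Real.exp 1)^n) ≤ n ! := by
  obtain ⟨m, rfl⟩ : ∃ m, n = m + 1 := ⟨n - 1, by omega⟩
  have hpi : Real.sqrt π ≤ Stirling.stirlingSeq (m+1) :=
    Stirling.stirlingSeq'_antitone.le_of_tendsto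
      (Stirling.tendsto_stirlingSeq_sqrt_pi.comp (Filter.tendsto_add_atTop_nat 1)) m
  have hd : (0:ℝ) < Real.sqrt (2*(m+1:ℕ)) * (((m+1:ℕ) : ℝ) / Real.exp 1)^(m+1) := by
    have : (0:ℝ) < ((m+1:ℕ):ℝ) := by positivity
    positivity
  have := mul_le_mul_of_nonneg_right hpi hd.le
  rw [Stirling.stirlingSeq, div_mul_cancel₀] at this
  · exact_mod_cast this
  · exact hd.ne'

lemma stirling_high (n : ℕ) (hn : 1 ≤ n) :
    (n ! : ℝ) ≤ (Real.exp 1 / Real.sqrt 2) * (Real.sqrt (2*n) * ((n : ℝ) / Real.exp 1)^n) := by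
  obtain ⟨m, rfl⟩ : ∃ m, n = m + 1 := ⟨n - 1, by omega⟩
  have hanti : Stirling.stirlingSeq (m+1) ≤ Stirling.stirlingSeq (0+1) :=
    Stirling.stirlingSeq'_antitone (Nat.zero_le m)
  rw [show (0+1) = 1 by rfl, Stirling.stirlingSeq_one] at hanti
  have hd : (0:ℝ) < Real.sqrt (2*(m+1:ℕ)) * (((m+1:ℕ) : ℝ) / Real.exp 1)^(m+1) := by
    have : (0:ℝ) < ((m+1:ℕ):ℝ) := by positivity
    positivity
  have := mul_le_mul_of_nonneg_right hanti hd.le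
  rw [Stirling.stirlingSeq, div_mul_cancel₀] at this
  · exact_mod_cast this
  · exact hd.ne'


lemma c_bound (k : ℕ) :
    ((2*k)! : ℝ) * Real.exp 1 ^ k
      ≤ (Real.exp 1 / Real.sqrt π) * (2^k * ((k ! : ℝ) * (2*(k:ℝ))^k)) := by
  have hspi : (0:ℝ) < Real.sqrt π := Real.sqrt_pos.2 Real.pi_pos
  have h2e : Real.sqrt π ≤ Real.exp 1 := by
    have h1 : Real.sqrt π ≤ Real.sqrt 4 := Real.sqrt_le_sqrt Real.pi_le_four
    have h2 : Real.sqrt 4 = 2 := by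
      rw [show (4:ℝ) = 2^2 by norm_num, Real.sqrt_sq (by norm_num)]
    have := Real.exp_one_gt_d9
    nlinarith
  rcases Nat.eq_zero_or_pos k with rfl | hk
  · norm_num
    rw [le_div_iff₀ hspi]
    nlinarith
  -- k ≥ 1
  have he : (0:ℝ) < Real.exp 1 := Real.exp_pos 1
  have hkR : (0:ℝ) < (k:ℝ) := by exact_mod_cast hk
  have hU := stirling_high (2*k) (by omega)
  have hL := stirling_low k hk
  have hcast : ((2*k : ℕ) : ℝ) = 2*(k:ℝ) := by push_cast; ring
  rw [hcast] at hU
  calc ((2*k)! : ℝ) * Real.exp 1 ^ k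
      ≤ ((Real.exp 1 / Real.sqrt 2) * (Real.sqrt (2*(2*(k:ℝ))) * ((2*(k:ℝ)) / Real.exp 1)^(2*k))) * Real.exp 1 ^ k := by
        refine mul_le_mul_of_nonneg_right ?_ (by positivity)
        convert hU using 4 <;> push_cast <;> ring
    _ = (Real.exp 1 / Real.sqrt π) * (2^k * ((Real.sqrt π * (Real.sqrt (2*(k:ℝ)) * ((k:ℝ) / Real.exp 1)^k)) * (2*(k:ℝ))^k)) := by
        have hs2 : (0:ℝ) < Real.sqrt 2 := Real.sqrt_pos.2 (by norm_num)
        have h4 : Real.sqrt (2*(2*(k:ℝ))) = Real.sqrt 2 * Real.sqrt (2*(k:ℝ)) := by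
          rw [← Real.sqrt_mul (by norm_num)]
        rw [h4, two_mul k, pow_add, div_pow, div_pow, mul_pow]
        field_simp
    _ ≤ (Real.exp 1 / Real.sqrt π) * (2^k * (((k !:ℝ)) * (2*(k:ℝ))^k)) := by
        refine mul_le_mul_of_nonneg_left ?_ (by positivity)
        refine mul_le_mul_of_nonneg_left ?_ (by positivity)
        exact mul_le_mul_of_nonneg_right hL (by positivity)


set_option maxHeartbeats 2000000 in
theorem subGaussian_square_mgf_bound
    {Ω : Type*} [MeasurableSpace Ω] (μ : Measure Ω) [IsProbabilityMeasure μ]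
    (σ : ℝ) (hσ : 0 < σ) (X : Ω → ℝ) (hXmeas : Measurable X)
    (hcent : ∫ ω, X ω ∂μ = 0)
    (hsubG : ∀ l : ℝ, ∫ ω, Real.exp (l * X ω) ∂μ ≤ Real.exp (l^2 * σ^2 / 2))
    (l : ℝ) (hl0 : 0 ≤ l) (hl1 : l ≤ 1 / (4 * σ^2)) :
    ∫ ω, Real.exp (l * (X ω ^ 2 - ∫ ω', X ω' ^ 2 ∂μ)) ∂μ
      ≤ Real.exp (10 * l^2 * σ^4) := by
  set m : ℝ := ∫ ω', X ω' ^ 2 ∂μ with hm_def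
  rcases hl0.eq_or_lt with rfl | hl
  · simp
  by_cases hInt : Integrable (fun ω => Real.exp (l * (X ω ^ 2 - m))) μ
  swap
  · rw [integral_undef hInt]; positivity
  have hσ2 : (0:ℝ) < σ^2 := by positivity
  have hu0 : (0:ℝ) ≤ l * σ^2 := by positivity
  have hu : l * σ^2 ≤ 1/4 := by
    rw [le_div_iff₀ (by positivity : (0:ℝ) < 4*σ^2)] at hl1
    nlinarith
  have hm0 : 0 ≤ m := integral_nonneg fun ω => by positivity
  -- integrability of exp (l * X²)
  have hInt2 : Integrable (fun ω => Real.exp (l * X ω ^ 2)) μ := by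
    have heq : (fun ω => Real.exp (l * X ω ^ 2))
        = fun ω => Real.exp (l * (X ω ^ 2 - m)) * Real.exp (l * m) := by
      funext ω; rw [← Real.exp_add]; ring_nf
    rw [heq]; exact hInt.mul_const _
  -- integrability of exp (a * X) for every a
  have hIntLin : ∀ a : ℝ, Integrable (fun ω => Real.exp (a * X ω)) μ := by
    intro a
    refine Integrable.mono' (hInt2.const_mul (Real.exp (a^2/(4*l)))) ?_ ?_
    · exact (measurable_exp.comp (hXmeas.const_mul a)).aestronglyMeasurable
    · refine ae_of_all _ fun ω => ?_
      rw [Real.norm_eq_abs, abs_of_pos (Real.exp_pos _), ← Real.exp_add]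
      refine Real.exp_le_exp.2 ?_
      have h4l : (0:ℝ) < 4*l := by linarith
      rw [div_add' _ _ _ h4l.ne', le_div_iff₀ h4l]
      nlinarith [sq_nonneg (2*l*X ω - a)]
  -- integrability of even powers
  have hIntPow : ∀ k : ℕ, Integrable (fun ω => X ω ^ (2*k)) μ := by
    intro k
    refine Integrable.mono' (hInt2.const_mul ((k ! : ℝ)/l^k)) ?_ ?_
    · exact (hXmeas.pow_const (2*k)).aestronglyMeasurable
    · refine ae_of_all _ fun ω => ?_
      have hxnn : (0:ℝ) ≤ X ω ^ (2*k) := by rw [pow_mul]; positivity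
      rw [Real.norm_eq_abs, abs_of_nonneg hxnn]
      have h2 := pow_div_factorial_le_exp (by positivity : (0:ℝ) ≤ l * X ω^2) k
      rw [mul_pow] at h2
      have hlk : (0:ℝ) < l^k := by positivity
      have hfk : (0:ℝ) < (k ! : ℝ) := by positivity
      rw [pow_mul]
      rw [div_le_iff₀ hfk] at h2
      calc (X ω^2)^k = (l^k*(X ω^2)^k)/l^k := by field_simp
        _ ≤ (Real.exp (l*X ω^2) * (k !:ℝ))/l^k := by gcongr
        _ = (k !:ℝ)/l^k * Real.exp (l*X ω^2) := by ring
  -- moment bounds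
  have moment : ∀ k : ℕ, 1 ≤ k →
      ∫ ω, X ω^(2*k) ∂μ ≤ ((2*k)! : ℝ) * Real.exp 1^k * σ^(2*k) / (2*(k:ℝ))^k := by
    intro k hk
    have hkR : (0:ℝ) < (k:ℝ) := by exact_mod_cast hk
    set a : ℝ := Real.sqrt (2*(k:ℝ)) / σ with ha_def
    have ha : 0 < a := by
      have : (0:ℝ) < Real.sqrt (2*(k:ℝ)) := Real.sqrt_pos.2 (by positivity)
      positivity
    have ha2 : a^2 = 2*(k:ℝ)/σ^2 := by
      rw [ha_def, div_pow, Real.sq_sqrt (by positivity : (0:ℝ) ≤ 2*(k:ℝ))]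
    have hIntNeg : Integrable (fun ω => Real.exp (-a * X ω)) μ := hIntLin (-a)
    have hIntCosh : Integrable (fun ω => (Real.exp (a*X ω) + Real.exp (-a*X ω))/2) μ :=
      ((hIntLin a).add hIntNeg).div_const 2
    have hIntL : Integrable (fun ω => (a^(2*k)/((2*k)! :ℝ)) * X ω^(2*k)) μ :=
      (hIntPow k).const_mul _
    have hpt : (fun ω => (a^(2*k)/((2*k)! :ℝ)) * X ω^(2*k))
        ≤ fun ω => (Real.exp (a*X ω) + Real.exp (-a*X ω))/2 := by
      intro ω
      have h := pow_div_factorial_le_cosh (a * X ω) k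
      rw [mul_pow] at h
      have : -(a * X ω) = -a * X ω := by ring
      rw [this] at h
      calc (a^(2*k)/((2*k)!:ℝ)) * X ω^(2*k) = a^(2*k)*X ω^(2*k)/((2*k)!:ℝ) := by ring
        _ ≤ (Real.exp (a*X ω) + Real.exp (-a*X ω))/2 := h
    have hint := integral_mono hIntL hIntCosh hpt
    rw [integral_const_mul] at hint
    have hrhs : ∫ ω, (Real.exp (a*X ω) + Real.exp (-a*X ω))/2 ∂μ ≤ Real.exp 1 ^ k := by
      rw [integral_div, integral_add (hIntLin a) hIntNeg]
      have h1 := hsubG a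
      have h2 := hsubG (-a)
      have hsq : (-a)^2 = a^2 := by ring
      rw [hsq] at h2
      have he : a^2*σ^2/2 = (k:ℝ) := by rw [ha2]; field_simp
      have hek : Real.exp (a^2*σ^2/2) = Real.exp 1 ^ k := by
        rw [he, Real.exp_one_pow]
      linarith
    have h3 : a^(2*k)/((2*k)!:ℝ) * ∫ ω, X ω^(2*k) ∂μ ≤ Real.exp 1 ^ k := hint.trans hrhs
    have ha2k : a^(2*k) = (2*(k:ℝ))^k / σ^(2*k) := by
      rw [pow_mul, ha2, div_pow, ← pow_mul]
    have h2kfac : (0:ℝ) < ((2*k)!:ℝ) := by positivity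
    have hapos : (0:ℝ) < a^(2*k) := by positivity
    have h4 : ∫ ω, X ω^(2*k) ∂μ ≤ ((2*k)!:ℝ) * Real.exp 1^k / a^(2*k) := by
      rw [le_div_iff₀ hapos]
      calc (∫ ω, X ω^(2*k) ∂μ) * a^(2*k)
          = (a^(2*k)/((2*k)!:ℝ) * ∫ ω, X ω^(2*k) ∂μ) * ((2*k)!:ℝ) := by
            field_simp
        _ ≤ Real.exp 1^k * ((2*k)!:ℝ) := mul_le_mul_of_nonneg_right h3 h2kfac.le
        _ = ((2*k)!:ℝ)*Real.exp 1^k := mul_comm _ _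
    rw [ha2k] at h4
    calc ∫ ω, X ω^(2*k) ∂μ ≤ ((2*k)!:ℝ) * Real.exp 1^k / ((2*(k:ℝ))^k / σ^(2*k)) := h4
      _ = ((2*k)! : ℝ) * Real.exp 1^k * σ^(2*k) / (2*(k:ℝ))^k := by
          rw [div_div_eq_mul_div]
  -- the term sequence
  set t : ℕ → ℝ := fun k => l^k * (∫ ω, X ω^(2*k) ∂μ) / k ! with ht_def
  have hIntNonneg : ∀ k : ℕ, 0 ≤ ∫ ω, X ω^(2*k) ∂μ :=
    fun k => integral_nonneg fun ω => by rw [pow_mul]; positivity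
  have ht_nonneg : ∀ k, 0 ≤ t k := by
    intro k
    have := hIntNonneg k
    rw [ht_def]
    positivity
  have hspi : (0:ℝ) < Real.sqrt π := Real.sqrt_pos.2 Real.pi_pos
  have hE1 : (1:ℝ) ≤ Real.exp 1 / Real.sqrt π := by
    rw [le_div_iff₀ hspi, one_mul]
    have h1 : Real.sqrt π ≤ Real.sqrt 4 := Real.sqrt_le_sqrt Real.pi_le_four
    have h2 : Real.sqrt 4 = 2 := by
      rw [show (4:ℝ) = 2^2 by norm_num, Real.sqrt_sq (by norm_num)]
    nlinarith [Real.exp_one_gt_d9]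
  have htb : ∀ k : ℕ, t k ≤ (Real.exp 1/Real.sqrt π) * (2*(l*σ^2))^k := by
    intro k
    rcases Nat.eq_zero_or_pos k with rfl | hk
    · have : t 0 = 1 := by
        rw [ht_def]
        simp
      rw [this]; simpa using hE1
    have hkR : (0:ℝ) < (k:ℝ) := by exact_mod_cast hk
    have h1 := moment k hk
    have h2 := c_bound k
    have hfk : (0:ℝ) < (k ! : ℝ) := by positivity
    have h2k : (0:ℝ) < (2*(k:ℝ))^k := by positivity
    have hlk : (0:ℝ) ≤ l^k := by positivity
    calc t k ≤ l^k * (((2*k)!:ℝ) * Real.exp 1^k * σ^(2*k)/(2*(k:ℝ))^k) / k ! := by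
          show l^k * (∫ ω, X ω^(2*k) ∂μ) / k ! ≤ _
          gcongr
    _ ≤ l^k * ((Real.exp 1/Real.sqrt π) * (2^k*((k !:ℝ)*(2*(k:ℝ))^k)) * σ^(2*k)/(2*(k:ℝ))^k) / k ! := by
          gcongr
    _ = (Real.exp 1/Real.sqrt π) * (2*(l*σ^2))^k := by
          rw [mul_pow, mul_pow, pow_mul]
          field_simp
          ring
  have hr0 : (0:ℝ) ≤ 2*(l*σ^2) := by positivity
  have hr1 : 2*(l*σ^2) < 1 := by nlinarith
  have hgsum : Summable (fun k : ℕ => (Real.exp 1/Real.sqrt π) * (2*(l*σ^2))^k) :=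
    (summable_geometric_of_lt_one hr0 hr1).mul_left _
  have ht_sum : Summable t := Summable.of_nonneg_of_le ht_nonneg htb hgsum
  -- exchange integral and sum
  have hf_int : ∀ k : ℕ, Integrable (fun ω => l^k * X ω^(2*k) / k !) μ :=
    fun k => ((hIntPow k).const_mul _).div_const _
  have hf_eq : ∀ k : ℕ, ∫ ω, l^k * X ω^(2*k) / k ! ∂μ = t k := by
    intro k
    rw [ht_def, integral_div, integral_const_mul]
  have hf_nonneg : ∀ (k : ℕ) (ω : Ω), 0 ≤ l^k * X ω^(2*k) / k ! := by
    intro k ω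
    have : (0:ℝ) ≤ X ω ^(2*k) := by rw [pow_mul]; positivity
    positivity
  have key : ∫ ω, Real.exp (l * X ω^2) ∂μ = ∑' k, t k := by
    have hptw : ∀ ω, Real.exp (l * X ω^2) = ∑' k : ℕ, l^k * X ω^(2*k) / k ! := by
      intro ω
      rw [real_exp_tsum (l * X ω^2)]
      refine tsum_congr fun k => ?_
      rw [mul_pow, pow_mul]
    have hne : ∑' k : ℕ, ∫⁻ ω, ‖l^k * X ω^(2*k) / k !‖₊ ∂μ ≠ ⊤ := by
      have hlin : ∀ k : ℕ, ∫⁻ ω, ‖l^k * X ω^(2*k) / k !‖₊ ∂μ = ENNReal.ofReal (t k) := by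
        intro k
        rw [← hf_eq k, ofReal_integral_eq_lintegral_ofReal (hf_int k)
          (ae_of_all _ fun ω => hf_nonneg k ω)]
        refine lintegral_congr fun ω => ?_
        rw [← enorm_eq_nnnorm, Real.enorm_eq_ofReal (hf_nonneg k ω)]
      rw [tsum_congr hlin, ← ENNReal.ofReal_tsum_of_nonneg ht_nonneg ht_sum]
      exact ENNReal.ofReal_ne_top
    calc ∫ ω, Real.exp (l*X ω^2) ∂μ
        = ∫ ω, ∑' k : ℕ, l^k * X ω^(2*k) / k ! ∂μ := by
          exact integral_congr_ae (ae_of_all _ hptw)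
      _ = ∑' k : ℕ, ∫ ω, l^k * X ω^(2*k) / k ! ∂μ :=
          integral_tsum (fun k => ((hf_int k).aestronglyMeasurable)) hne
      _ = ∑' k, t k := tsum_congr hf_eq
  -- split the sum
  have hshift1 : Summable (fun k : ℕ => t (k+1)) := (summable_nat_add_iff 1).2 ht_sum
  have hshift2 : Summable (fun k : ℕ => t (k+1+1)) := (summable_nat_add_iff 1).2 hshift1
  have hsplit : ∑' k, t k = t 0 + t 1 + ∑' k, t (k+1+1) := by
    rw [Summable.tsum_eq_zero_add ht_sum, Summable.tsum_eq_zero_add hshift1, add_assoc]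
  have ht0 : t 0 = 1 := by rw [ht_def]; simp
  have ht1 : t 1 = l * m := by
    show l^1 * (∫ ω, X ω^(2*1) ∂μ)/(1! : ℕ) = l*m
    norm_num [← hm_def]
  -- bound the tail
  have hR : ∑' k, t (k+1+1) ≤ (Real.exp 1/Real.sqrt π) * ((2*(l*σ^2))^2 * (1 - 2*(l*σ^2))⁻¹) := by
    have hb : ∀ k : ℕ, t (k+1+1) ≤ (Real.exp 1/Real.sqrt π) * (2*(l*σ^2))^2 * (2*(l*σ^2))^k := by
      intro k
      calc t (k+1+1) ≤ (Real.exp 1/Real.sqrt π) * (2*(l*σ^2))^(k+1+1) := htb (k+1+1)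
        _ = (Real.exp 1/Real.sqrt π) * (2*(l*σ^2))^2 * (2*(l*σ^2))^k := by ring
    have hgs : Summable (fun k : ℕ => (Real.exp 1/Real.sqrt π) * (2*(l*σ^2))^2 * (2*(l*σ^2))^k) :=
      (summable_geometric_of_lt_one hr0 hr1).mul_left _
    calc ∑' k, t (k+1+1) ≤ ∑' k : ℕ, (Real.exp 1/Real.sqrt π) * (2*(l*σ^2))^2 * (2*(l*σ^2))^k :=
          Summable.tsum_le_tsum hb hshift2 hgs
      _ = (Real.exp 1/Real.sqrt π) * ((2*(l*σ^2))^2 * (1 - 2*(l*σ^2))⁻¹) := by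
          rw [tsum_mul_left, tsum_geometric_of_lt_one hr0 hr1]; ring
  have hRnn : 0 ≤ ∑' k, t (k+1+1) := tsum_nonneg fun k => ht_nonneg _
  -- numeric bound on the tail
  have hE : Real.exp 1/Real.sqrt π ≤ 1.640625 := by
    rw [div_le_iff₀ hspi]
    have h17 : (1.7:ℝ) ≤ Real.sqrt π := by
      rw [show (1.7:ℝ) = Real.sqrt (1.7^2) by
        rw [Real.sqrt_sq (by norm_num)]]
      exact Real.sqrt_le_sqrt (by nlinarith [Real.pi_gt_three])
    nlinarith [Real.exp_one_lt_d9]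
  have hnum : (Real.exp 1/Real.sqrt π) * ((2*(l*σ^2))^2 * (1 - 2*(l*σ^2))⁻¹)
      ≤ 10*(l*σ^2)^2 + 50*(l*σ^2)^4 := by
    set u := l*σ^2 with hu_def
    have hpos : (0:ℝ) < 1 - 2*u := by nlinarith
    rw [← mul_assoc, ← div_eq_mul_inv, div_le_iff₀ hpos]
    have haux : (0:ℝ) < 100*u^2 - 25*u + 13.75 := by nlinarith [sq_nonneg (10*u-5/4)]
    have hprod : (0:ℝ) ≤ u^2*((1/4-u)*(100*u^2-25*u+13.75)) := by
      have h14 : (0:ℝ) ≤ 1/4 - u := by linarith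
      positivity
    have hEmul := mul_le_mul_of_nonneg_right hE (by positivity : (0:ℝ) ≤ (2*u)^2)
    nlinarith [hEmul, sq_nonneg u]
  -- final chain
  have hmain : ∫ ω, Real.exp (l * (X ω^2 - m)) ∂μ
      = (∑' k, t k) * Real.exp (-(l*m)) := by
    calc ∫ ω, Real.exp (l * (X ω^2 - m)) ∂μ
        = ∫ ω, Real.exp (l * X ω^2) * Real.exp (-(l*m)) ∂μ := by
          refine integral_congr_ae (ae_of_all _ fun ω => ?_)
          show Real.exp (l * (X ω ^ 2 - m)) = Real.exp (l * X ω^2) * Real.exp (-(l*m))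
          rw [← Real.exp_add]
          ring_nf
      _ = (∫ ω, Real.exp (l * X ω^2) ∂μ) * Real.exp (-(l*m)) := integral_mul_const _ _
      _ = (∑' k, t k) * Real.exp (-(l*m)) := by rw [key]
  rw [hmain, hsplit, ht0, ht1]
  have hexpneg : Real.exp (-(l*m)) ≤ 1 :=
    Real.exp_le_one_iff.2 (neg_nonpos_of_nonneg (by positivity))
  have h5 : (1 + l*m) * Real.exp (-(l*m)) ≤ 1 := by
    have := Real.add_one_le_exp (l*m)
    calc (1 + l*m) * Real.exp (-(l*m)) ≤ Real.exp (l*m) * Real.exp (-(l*m)) := by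
          refine mul_le_mul_of_nonneg_right (by linarith) (Real.exp_pos _).le
      _ = 1 := by rw [← Real.exp_add]; simp
  have hfinal : (1 + l*m + ∑' k, t (k+1+1)) * Real.exp (-(l*m))
      ≤ 1 + (10*(l*σ^2)^2 + 50*(l*σ^2)^4) := by
    have hRle : ∑' k, t (k+1+1) ≤ 10*(l*σ^2)^2 + 50*(l*σ^2)^4 := hR.trans hnum
    calc (1 + l*m + ∑' k, t (k+1+1)) * Real.exp (-(l*m))
        = (1 + l*m) * Real.exp (-(l*m)) + (∑' k, t (k+1+1)) * Real.exp (-(l*m)) := by ring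
      _ ≤ 1 + (∑' k, t (k+1+1)) * 1 := by
          refine add_le_add h5 (mul_le_mul_of_nonneg_left hexpneg hRnn)
      _ ≤ 1 + (10*(l*σ^2)^2 + 50*(l*σ^2)^4) := by rw [mul_one]; linarith
  refine le_trans hfinal ?_
  have hx : (0:ℝ) ≤ 10*(l*σ^2)^2 := by positivity
  have hsum3 := Real.sum_le_exp_of_nonneg hx 3
  have hval : ∑ i ∈ Finset.range 3, (10*(l*σ^2)^2)^i / (i)! 
      = 1 + 10*(l*σ^2)^2 + 50*(l*σ^2)^4 := by
    simp [Finset.sum_range_succ]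
    ring
  rw [hval] at hsum3
  have hexp_eq : Real.exp (10*(l*σ^2)^2) = Real.exp (10*l^2*σ^4) := by
    congr 1; ring
  linarith [hsum3, hexp_eq.le, hexp_eq.ge]
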